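/- For every integer n ≥ 2 and every integer k with 2^{n−2} ≤ k ≤ 2^{n−1}, θ(n,k) ≥ θ(n, 2^{n−2}). -/

import Mathlib

open Finset

/-- Two vertices of the hypercube `Q_n` are adjacent iff they differ in exactly one
coordinate. -/
def cubeEdge {n : ℕ} (u v : Fin n → Bool) : Prop :=
  (Finset.univ.filter (fun i => u i ≠ v i)).card = 1

instance {n : ℕ} (u v : Fin n → Bool) : Decidable (cubeEdge u v) := by
  unfold cubeEdge; infer_instance

/-- `θ(n,S)`: the number of edges of `Q_n` with exactly one endpoint in `S`. -/
def edgeBoundary (n : ℕ) (S : Finset (Fin n → Bool)) : ℕ :=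
  (Finset.univ.filter (fun p : (Fin n → Bool) × (Fin n → Bool) =>
    p.1 ∈ S ∧ p.2 ∉ S ∧ cubeEdge p.1 p.2)).card

/-- `θ(n,k) = min {θ(n,S) : S ⊆ V(Q_n), |S| = k}`. -/
noncomputable def thetaMin (n k : ℕ) : ℕ :=
  sInf {m | ∃ S : Finset (Fin n → Bool), S.card = k ∧ edgeBoundary n S = m}

/-- The half plane `{x : x_i = a}` of `Q_n`. -/
def halfPlane (n : ℕ) (i : Fin n) (a : Bool) : Finset (Fin n → Bool) :=
  Finset.univ.filter (fun x => x i = a)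

/-- `Type(S) = min_H |S ∩ H|`, minimum over the `2n` half planes of `Q_n`. -/
noncomputable def typeOf (n : ℕ) (S : Finset (Fin n → Bool)) : ℕ :=
  sInf {m | ∃ (i : Fin n) (a : Bool), (S ∩ halfPlane n i a).card = m}

/-- `θ(n,k,t) = min {θ(n,S) : |S| = k, Type(S) = t}`. -/
noncomputable def thetaMinType (n k t : ℕ) : ℕ :=
  sInf {m | ∃ S : Finset (Fin n → Bool),
    S.card = k ∧ typeOf n S = t ∧ edgeBoundary n S = m}

/-- Graph distance on the cycle `C_m` with vertices labelled by naturals. -/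
def cycleDist (m a b : ℕ) : ℕ := min (Nat.dist a b) (m - Nat.dist a b)

/-- The wirelength of an embedding `η` of `Q_n` into the cycle `C_{2^n}`:
the sum of cycle distances over all (unordered) edges of `Q_n`.  (The sum over
ordered pairs counts every edge twice, whence the division by `2`.) -/
def wirelength (n : ℕ) (η : (Fin n → Bool) → ℕ) : ℕ :=
  ((Finset.univ.filter (fun p : (Fin n → Bool) × (Fin n → Bool) =>
    cubeEdge p.1 p.2)).sum (fun p => cycleDist (2^n) (η p.1) (η p.2))) / 2

/-- The reflected Gray code embedding `ξ_n(x) = (y)_2 + 1`, where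
`y_i = (x_1 + ⋯ + x_i) mod 2`. -/
def xi (n : ℕ) (x : Fin n → Bool) : ℕ :=
  (Finset.univ.sum (fun i : Fin n =>
    ((Finset.univ.filter (fun j : Fin n => j ≤ i ∧ x j = true)).card % 2)
      * 2 ^ (n - 1 - (i : ℕ)))) + 1

/-- `f(x) = 3/4 − (64/7)(x − 1/2)²`. -/
noncomputable def fGuu (x : ℝ) : ℝ := 3/4 - 64/7 * (x - 1/2)^2

/-- `takDelta i` is `Δ_{i+1}`: `Δ_1(x) = 1/2 − |x − 1/2|`,
`Δ_{n}(x) = (1/2)Δ_{n−1}(2x − ⌊2x⌋)`. -/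
noncomputable def takDelta : ℕ → ℝ → ℝ
  | 0, x => 1/2 - |x - 1/2|
  | n+1, x => takDelta n (2*x - (⌊2*x⌋ : ℝ)) / 2

/-- `m_n(x) = Σ_{i=1}^n Δ_i(x)`, the n-th partial sum of the Takagi function. -/
noncomputable def mTakagi (n : ℕ) (x : ℝ) : ℝ := ∑ i ∈ Finset.range n, takDelta i x

/-- `y_N = ⌈2^N/24⌉ / 2^N`. -/
noncomputable def yGuu (N : ℕ) : ℝ := (⌈(2^N : ℝ)/24⌉ : ℝ) / 2^N

/-- `p_N = 1/2 − y_N`. -/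
noncomputable def pGuu (N : ℕ) : ℝ := 1/2 - yGuu N

/-- `g_{n,i,a}^{-1}(S)`, where `g_{n,i,a}` inserts the letter `a` at position `i`. -/
def gPre (n : ℕ) (i : Fin (n+1)) (a : Bool) (S : Finset (Fin (n+1) → Bool)) :
    Finset (Fin n → Bool) :=
  Finset.univ.filter (fun x => i.insertNth a x ∈ S)


section ThetaAux

/-- Chord inequality for `logb 2` on `[1,2]`. -/
lemma logb_chord {t : ℝ} (h1 : 1 ≤ t) (h2 : t ≤ 2) : t - 1 ≤ Real.logb 2 t := by
  have hlog2 : (0:ℝ) < Real.log 2 := Real.log_pos one_lt_two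
  have hcc := strictConcaveOn_log_Ioi.concaveOn
  have key : (2 - t) * Real.log 1 + (t - 1) * Real.log 2 ≤ Real.log ((2 - t) * 1 + (t - 1) * 2) := by
    have := hcc.2 (Set.mem_Ioi.2 one_pos) (Set.mem_Ioi.2 two_pos)
      (by linarith : (0:ℝ) ≤ 2 - t) (by linarith : (0:ℝ) ≤ t - 1) (by ring)
    simpa [smul_eq_mul] using this
  have : (t - 1) * Real.log 2 ≤ Real.log t := by
    simp [Real.log_one] at key
    convert key using 2 <;> ring
  rw [Real.logb, le_div_iff₀ hlog2]
  linarith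

/-- The key inductive inequality. -/
lemma key_ineq (a b : ℕ) (hab : a ≤ b) (m : ℝ) :
    ((a + b : ℕ) : ℝ) * ((m + 1) - Real.logb 2 ((a + b : ℕ) : ℝ)) ≤
      (a : ℝ) * (m - Real.logb 2 a) + (b : ℝ) * (m - Real.logb 2 b) + ((b : ℝ) - a) := by
  rcases Nat.eq_zero_or_pos a with ha | ha
  · subst ha; push_cast; ring_nf; simp
  rcases Nat.eq_zero_or_pos b with hb | hb
  · omega
  have ha1 : (1:ℝ) ≤ a := by exact_mod_cast ha
  have hb1 : (1:ℝ) ≤ b := by exact_mod_cast hb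
  have hab' : (a:ℝ) ≤ b := by exact_mod_cast hab
  have hane : (a:ℝ) ≠ 0 := by linarith
  have hbne : (b:ℝ) ≠ 0 := by linarith
  have hsne : (a:ℝ) + b ≠ 0 := by linarith
  have h1 : (1:ℝ) + Real.logb 2 a ≤ Real.logb 2 ((a:ℝ) + b) := by
    have : Real.logb 2 (2 * a) ≤ Real.logb 2 ((a:ℝ) + b) :=
      Real.logb_le_logb_of_le one_lt_two (by linarith) (by linarith)
    rwa [Real.logb_mul two_ne_zero hane, Real.logb_self_eq_one one_lt_two] at this
  have h2 : (a:ℝ)/b ≤ Real.logb 2 ((a:ℝ) + b) - Real.logb 2 b := by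
    have ht1 : (1:ℝ) ≤ ((a:ℝ) + b)/b := by
      rw [le_div_iff₀ (by linarith)]; linarith
    have ht2 : ((a:ℝ) + b)/b ≤ 2 := by
      rw [div_le_iff₀ (by linarith)]; linarith
    have := logb_chord ht1 ht2
    rw [Real.logb_div hsne hbne] at this
    have heq : (a:ℝ)/b = ((a:ℝ)+b)/b - 1 := by field_simp; ring
    rw [heq]; exact this
  have h2' : (a:ℝ) ≤ b * (Real.logb 2 ((a:ℝ) + b) - Real.logb 2 b) := by
    have := mul_le_mul_of_nonneg_left h2 (by linarith : (0:ℝ) ≤ b)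
    rwa [mul_div_cancel₀ _ hbne] at this
  have h1' : (a:ℝ) * (1 + Real.logb 2 a) ≤ a * Real.logb 2 ((a:ℝ) + b) :=
    mul_le_mul_of_nonneg_left h1 (by linarith)
  push_cast
  nlinarith [h1', h2']

lemma sum_fun_succ {n : ℕ} {M : Type*} [AddCommMonoid M] (f : (Fin (n+1) → Bool) → M) :
    ∑ u : Fin (n+1) → Bool, f u =
      (∑ x : Fin n → Bool, f (Fin.cons false x)) + ∑ x : Fin n → Bool, f (Fin.cons true x) := by
  rw [← Equiv.sum_comp (Fin.consEquiv (fun _ => Bool)) f, Fintype.sum_prod_type,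
    Fintype.sum_bool]
  simp [Fin.consEquiv, add_comm]

lemma cubeEdge_cons_same {n : ℕ} (a : Bool) (x y : Fin n → Bool) :
    cubeEdge (Fin.cons a x) (Fin.cons a y) ↔ cubeEdge x y := by
  unfold cubeEdge
  rw [Finset.card_filter, Finset.card_filter, Fin.sum_univ_succ]
  simp

lemma cubeEdge_cons_ne {n : ℕ} (a b : Bool) (hab : a ≠ b) (x y : Fin n → Bool) :
    cubeEdge (Fin.cons a x) (Fin.cons b y) ↔ x = y := by
  unfold cubeEdge
  rw [Finset.card_filter, Fin.sum_univ_succ]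
  simp only [Fin.cons_zero, Fin.cons_succ, hab, if_pos, ne_eq, not_false_eq_true]
  constructor
  · intro h
    have hz : ∑ i : Fin n, (if ¬ x i = y i then 1 else 0) = 0 := by omega
    rw [Finset.sum_eq_zero_iff] at hz
    funext i
    have := hz i (Finset.mem_univ i)
    by_contra hne
    simp [hne] at this
  · intro h; subst h; simp

lemma edgeBoundary_eq_sum (n : ℕ) (S : Finset (Fin n → Bool)) :
    edgeBoundary n S = ∑ u : Fin n → Bool, ∑ v : Fin n → Bool,
      (if u ∈ S ∧ v ∉ S ∧ cubeEdge u v then 1 else 0) := by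
  rw [edgeBoundary, Finset.card_filter, Fintype.sum_prod_type]

lemma edgeBoundary_succ (n : ℕ) (S : Finset (Fin (n+1) → Bool))
    (A B : Finset (Fin n → Bool))
    (hA : A = univ.filter (fun x => Fin.cons false x ∈ S))
    (hB : B = univ.filter (fun x => Fin.cons true x ∈ S)) :
    edgeBoundary (n+1) S =
      edgeBoundary n A + edgeBoundary n B + (A \ B).card + (B \ A).card := by
  have hmemA : ∀ x, Fin.cons false x ∈ S ↔ x ∈ A := by intro x; simp [hA]
  have hmemB : ∀ x, Fin.cons true x ∈ S ↔ x ∈ B := by intro x; simp [hB]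
  have cross : ∀ (P Q : Finset (Fin n → Bool)),
      (∑ x : Fin n → Bool, ∑ y : Fin n → Bool,
        (if x ∈ P ∧ y ∉ Q ∧ x = y then 1 else 0)) = (P \ Q).card := by
    intro P Q
    have : ∀ x : Fin n → Bool, (∑ y : Fin n → Bool,
        (if x ∈ P ∧ y ∉ Q ∧ x = y then 1 else 0)) = if x ∈ P ∧ x ∉ Q then 1 else 0 := by
      intro x
      rw [Finset.sum_eq_single x]
      · simp
      · intro y _ hy; simp [fun h : x = y => hy h.symm]; tauto
      · simp
    rw [Finset.sum_congr rfl (fun x _ => this x), ← Finset.card_filter]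
    congr 1
    ext x; simp [Finset.mem_sdiff]
  rw [edgeBoundary_eq_sum, sum_fun_succ]
  rw [Finset.sum_congr rfl (fun x _ => sum_fun_succ _),
    Finset.sum_congr rfl (fun x _ => sum_fun_succ
      (f := fun v => if Fin.cons true x ∈ S ∧ v ∉ S ∧ cubeEdge (Fin.cons true x) v then 1 else 0))]
  rw [Finset.sum_add_distrib, Finset.sum_add_distrib]
  simp only [hmemA, hmemB, cubeEdge_cons_same, cubeEdge_cons_ne false true (by simp),
    cubeEdge_cons_ne true false (by simp)]
  rw [edgeBoundary_eq_sum n A, edgeBoundary_eq_sum n B]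
  rw [cross A B, cross B A]
  ring

lemma card_split (n : ℕ) (S : Finset (Fin (n+1) → Bool))
    (A B : Finset (Fin n → Bool))
    (hA : A = univ.filter (fun x => Fin.cons false x ∈ S))
    (hB : B = univ.filter (fun x => Fin.cons true x ∈ S)) :
    S.card = A.card + B.card := by
  have : S.card = ∑ u : Fin (n+1) → Bool, (if u ∈ S then 1 else 0) := by
    rw [← Finset.card_filter]; congr 1; ext u; simp
  rw [this, sum_fun_succ, hA, hB, Finset.card_filter, Finset.card_filter]

/-- The edge-isoperimetric inequality `θ(S) ≥ |S| (n − log₂ |S|)`. -/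
theorem edge_iso (n : ℕ) (S : Finset (Fin n → Bool)) :
    (S.card : ℝ) * (n - Real.logb 2 S.card) ≤ (edgeBoundary n S : ℝ) := by
  induction n with
  | zero =>
    have h1 : S.card ≤ 1 := by
      have := Finset.card_le_univ S
      simpa using this
    interval_cases h : S.card <;> simp [h]
  | succ n ih =>
    set A : Finset (Fin n → Bool) := univ.filter (fun x => Fin.cons false x ∈ S) with hA
    set B : Finset (Fin n → Bool) := univ.filter (fun x => Fin.cons true x ∈ S) with hB
    have hcard : S.card = A.card + B.card := card_split n S A B hA hB
    have hbd : edgeBoundary (n+1) S =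
        edgeBoundary n A + edgeBoundary n B + (A \ B).card + (B \ A).card :=
      edgeBoundary_succ n S A B hA hB
    have hsd1 : (A.card : ℝ) - B.card ≤ ((A \ B).card : ℝ) + ((B \ A).card : ℝ) := by
      have := Finset.card_le_card_sdiff_add_card (s := A) (t := B)
      have h2 : ((A\B).card:ℝ) + B.card ≥ A.card := by exact_mod_cast this
      have : (0:ℝ) ≤ ((B \ A).card : ℝ) := by positivity
      linarith
    have hsd2 : (B.card : ℝ) - A.card ≤ ((A \ B).card : ℝ) + ((B \ A).card : ℝ) := by
      have := Finset.card_le_card_sdiff_add_card (s := B) (t := A)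
      have h2 : ((B\A).card:ℝ) + A.card ≥ B.card := by exact_mod_cast this
      have : (0:ℝ) ≤ ((A \ B).card : ℝ) := by positivity
      linarith
    have ihA := ih A
    have ihB := ih B
    rw [hcard, hbd]
    push_cast [Nat.cast_add]
    rcases le_total A.card B.card with hab | hab
    · have := key_ineq A.card B.card hab n
      push_cast at this
      calc ((A.card:ℝ) + B.card) * ((n:ℝ) + 1 - Real.logb 2 ((A.card:ℝ) + B.card))
          ≤ (A.card:ℝ) * (n - Real.logb 2 A.card) + (B.card:ℝ) * (n - Real.logb 2 B.card)
            + ((B.card:ℝ) - A.card) := this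
        _ ≤ _ := by linarith
    · have := key_ineq B.card A.card hab n
      push_cast at this
      calc ((A.card:ℝ) + B.card) * ((n:ℝ) + 1 - Real.logb 2 ((A.card:ℝ) + B.card))
          = ((B.card:ℝ) + A.card) * ((n:ℝ) + 1 - Real.logb 2 ((B.card:ℝ) + A.card)) := by
            ring_nf
        _ ≤ (B.card:ℝ) * (n - Real.logb 2 B.card) + (A.card:ℝ) * (n - Real.logb 2 A.card)
            + ((A.card:ℝ) - B.card) := this
        _ ≤ _ := by linarith

lemma boundary_lower (m : ℕ) (S : Finset (Fin (m+2) → Bool))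
    (h1 : 2^m ≤ S.card) (h2 : S.card ≤ 2^(m+1)) : 2^(m+1) ≤ edgeBoundary (m+2) S := by
  set k := S.card with hk
  have hkpos : 0 < k := lt_of_lt_of_le (pow_pos (by norm_num) m) h1
  have hkR : (0:ℝ) < k := by exact_mod_cast hkpos
  set t : ℝ := (2^(m+1) : ℝ) / k with ht
  have hpow : (0:ℝ) < (2:ℝ)^(m+1) := by positivity
  have ht1 : 1 ≤ t := by
    rw [ht, le_div_iff₀ hkR]
    have : (k:ℝ) ≤ (2:ℝ)^(m+1) := by exact_mod_cast h2
    linarith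
  have ht2 : t ≤ 2 := by
    rw [ht, div_le_iff₀ hkR]
    have : ((2:ℝ))^m ≤ (k:ℝ) := by exact_mod_cast h1
    have : (2:ℝ)^(m+1) = 2 * (2:ℝ)^m := by ring
    nlinarith [this]
  have hLk : Real.logb 2 k = (m+1 : ℝ) - Real.logb 2 t := by
    have hkt : (k:ℝ) = (2:ℝ)^(m+1) / t := by
      rw [ht]; field_simp
    rw [hkt, Real.logb_div (by positivity) (by linarith), Real.logb_pow,
      Real.logb_self_eq_one one_lt_two]
    push_cast; ring
  have hmain := edge_iso (m+2) S
  rw [← hk, hLk] at hmain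
  have hchord := logb_chord ht1 ht2
  have hfinal : (2:ℝ)^(m+1) ≤ (edgeBoundary (m+2) S : ℝ) := by
    have hexp : (k:ℝ) * ((m+2:ℕ):ℝ) - (k:ℝ)*((m+1:ℝ) - Real.logb 2 t)
        = k * (1 + Real.logb 2 t) := by push_cast; ring
    have h3 : (k:ℝ) * t ≤ k * (1 + Real.logb 2 t) := by nlinarith
    have h4 : (k:ℝ) * t = (2:ℝ)^(m+1) := by
      rw [ht]; field_simp
    nlinarith [hmain]
  exact_mod_cast hfinal

lemma subcube_exists (m : ℕ) : ∃ S : Finset (Fin (m+2) → Bool),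
    S.card = 2^m ∧ edgeBoundary (m+2) S ≤ 2^(m+1) := by
  set S : Finset (Fin (m+2) → Bool) :=
    univ.filter (fun x => x 0 = false ∧ x 1 = false) with hS
  have hcons1 : ∀ (a : Bool) (g : Fin (m+1) → Bool),
      (Fin.cons a g : Fin (m+2) → Bool) 1 = g 0 := by
    intro a g
    have : (1 : Fin (m+2)) = Fin.succ 0 := rfl
    rw [this, Fin.cons_succ]
  have hcard : S.card = 2^m := by
    rw [hS, Finset.card_filter, sum_fun_succ]
    have e1 : ∀ x : Fin (m+1) → Bool,
        (if (Fin.cons false x : Fin (m+2) → Bool) 0 = false ∧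
            (Fin.cons false x : Fin (m+2) → Bool) 1 = false then 1 else 0)
        = if x 0 = false then 1 else 0 := by
      intro x; rw [hcons1]; simp
    have e2 : ∀ x : Fin (m+1) → Bool,
        (if (Fin.cons true x : Fin (m+2) → Bool) 0 = false ∧
            (Fin.cons true x : Fin (m+2) → Bool) 1 = false then 1 else 0) = 0 := by
      intro x; simp
    rw [Finset.sum_congr rfl (fun x _ => e1 x), Finset.sum_congr rfl (fun x _ => e2 x)]
    simp only [Finset.sum_const_zero, add_zero]
    rw [sum_fun_succ]
    simp [Fin.cons_zero, Fintype.card_fun]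
  refine ⟨S, hcard, ?_⟩
  have hinner : ∀ u : Fin (m+2) → Bool, (∑ v : Fin (m+2) → Bool,
      (if u ∈ S ∧ v ∉ S ∧ cubeEdge u v then 1 else 0)) ≤ if u ∈ S then 2 else 0 := by
    intro u
    by_cases hu : u ∈ S
    · simp only [hu, true_and, if_true]
      have : (∑ v : Fin (m+2) → Bool, (if v ∉ S ∧ cubeEdge u v then 1 else 0))
          = (univ.filter (fun v => v ∉ S ∧ cubeEdge u v)).card := by
        rw [Finset.card_filter]
      rw [this]
      have hsub : (univ.filter (fun v => v ∉ S ∧ cubeEdge u v)) ⊆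
          {Function.update u 0 true, Function.update u 1 true} := by
        intro v hv
        rw [Finset.mem_filter] at hv
        obtain ⟨-, hvS, hedge⟩ := hv
        rw [hS, Finset.mem_filter] at hu hvS
        obtain ⟨-, hu0, hu1⟩ := hu
        have hedge' := hedge
        rw [cubeEdge, Finset.card_eq_one] at hedge'
        obtain ⟨j, hj⟩ := hedge'
        have hdiff : ∀ i : Fin (m+2), u i ≠ v i ↔ i = j := by
          intro i
          constructor
          · intro hi
            have : i ∈ Finset.univ.filter (fun i => u i ≠ v i) := by simp [hi]
            rw [hj] at this; simpa using this
          · rintro rfl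
            have hmem : i ∈ Finset.univ.filter (fun i' => u i' ≠ v i') := by
              rw [hj]; exact Finset.mem_singleton_self i
            simpa using hmem
        have hvne : v 0 = true ∨ v 1 = true := by
          by_contra hcon
          push_neg at hcon
          exact hvS ⟨Finset.mem_univ v, by simpa using hcon.1, by simpa using hcon.2⟩
        rcases hvne with hv0 | hv1
        · have hj0 : (0 : Fin (m+2)) = j := (hdiff 0).1 (by rw [hu0, hv0]; simp)
          have : v = Function.update u 0 true := by
            funext i
            rcases eq_or_ne i 0 with rfl | hi
            · rw [hv0, Function.update_self]
            · rw [Function.update_of_ne hi]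
              by_contra hne
              have := (hdiff i).1 (fun h => hne h.symm)
              exact hi (this.trans hj0.symm)
          simp [this]
        · have hj1 : (1 : Fin (m+2)) = j := (hdiff 1).1 (by rw [hu1, hv1]; simp)
          have : v = Function.update u 1 true := by
            funext i
            rcases eq_or_ne i 1 with rfl | hi
            · rw [hv1, Function.update_self]
            · rw [Function.update_of_ne hi]
              by_contra hne
              have := (hdiff i).1 (fun h => hne h.symm)
              exact hi (this.trans hj1.symm)
          simp [this]
      calc (univ.filter (fun v => v ∉ S ∧ cubeEdge u v)).card
          ≤ ({Function.update u 0 true, Function.update u 1 true} : Finset _).card :=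
            Finset.card_le_card hsub
        _ ≤ 2 := Finset.card_insert_le _ _ |>.trans (by simp)
    · simp [hu]
  calc edgeBoundary (m+2) S
      = ∑ u : Fin (m+2) → Bool, ∑ v : Fin (m+2) → Bool,
          (if u ∈ S ∧ v ∉ S ∧ cubeEdge u v then 1 else 0) := edgeBoundary_eq_sum _ _
    _ ≤ ∑ u : Fin (m+2) → Bool, (if u ∈ S then 2 else 0) :=
        Finset.sum_le_sum (fun u _ => hinner u)
    _ = 2 * S.card := by
        rw [Finset.sum_ite_mem]
        simp [Finset.inter_comm, mul_comm]
    _ = 2^(m+1) := by rw [hcard]; ring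

end ThetaAux

/-- Guu, Claim 11. For `2^{n−2} ≤ k ≤ 2^{n−1}`,
`θ(n,k) ≥ θ(n,2^{n−2})`. -/
theorem theta_ge_quarter (n k : ℕ) (hn : 2 ≤ n)
    (hk1 : 2^(n-2) ≤ k) (hk2 : k ≤ 2^(n-1)) :
    thetaMin n k ≥ thetaMin n (2^(n-2)) := by
  obtain ⟨m, rfl⟩ : ∃ m, n = m + 2 := ⟨n - 2, by omega⟩
  have hm2 : m + 2 - 2 = m := by omega
  have hm1 : m + 2 - 1 = m + 1 := by omega
  rw [hm2] at hk1 ⊢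
  rw [hm1] at hk2
  -- the set defining thetaMin (m+2) k is nonempty
  have hkcard : k ≤ Fintype.card (Fin (m+2) → Bool) := by
    rw [Fintype.card_fun]
    simp only [Fintype.card_bool, Fintype.card_fin]
    calc k ≤ 2^(m+1) := hk2
      _ ≤ 2^(m+2) := Nat.pow_le_pow_right (by norm_num) (by omega)
  obtain ⟨T, -, hT⟩ := Finset.exists_subset_card_eq (s := (Finset.univ : Finset (Fin (m+2) → Bool))) (n := k)
    (by rwa [Finset.card_univ])
  have hne : {x | ∃ S : Finset (Fin (m+2) → Bool), S.card = k ∧ edgeBoundary (m+2) S = x}.Nonempty :=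
    ⟨edgeBoundary (m+2) T, T, hT, rfl⟩
  obtain ⟨S, hScard, hSeq⟩ := Nat.sInf_mem hne
  obtain ⟨S₀, hS₀card, hS₀bd⟩ := subcube_exists m
  have hub : thetaMin (m+2) (2^m) ≤ 2^(m+1) := by
    have hmem : edgeBoundary (m+2) S₀ ∈
        {x | ∃ S : Finset (Fin (m+2) → Bool), S.card = 2^m ∧ edgeBoundary (m+2) S = x} :=
      ⟨S₀, hS₀card, rfl⟩
    exact le_trans (Nat.sInf_le hmem) hS₀bd
  have hlb : 2^(m+1) ≤ thetaMin (m+2) k := by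
    rw [thetaMin, ← hSeq]
    exact boundary_lower m S (hScard ▸ hk1) (hScard ▸ hk2)
  exact le_trans hub hlb
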